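/- For any a > R^2/(m+1), the Lebesgue measure in ℝ^{2m} of the set {Z_m = (x_1,y_1,…,x_m,y_m) : d_m(Z_m) ≤ a} equals π^m (a − R^2/(m+1))^m / (m+1)!. -/

import Mathlib

open MeasureTheory Finset

namespace VolDmAux

noncomputable def c (i : ℕ) : ℝ := Real.sqrt ((i+2)/(i+1))
noncomputable def d (i : ℕ) : ℝ := Real.sqrt ((i+1)/(i+2))

lemma c_sq (i : ℕ) : c i ^ 2 = (i+2)/(i+1) := Real.sq_sqrt (by positivity)
lemma d_sq (i : ℕ) : d i ^ 2 = (i+1)/(i+2) := Real.sq_sqrt (by positivity)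
lemma c_nonneg (i : ℕ) : 0 ≤ c i := Real.sqrt_nonneg _
lemma c_mul_d (i : ℕ) : c i * d i = 1 := by
  rw [c, d, ← Real.sqrt_mul (by positivity)]
  rw [show ((i:ℝ)+2)/(i+1) * (((i:ℝ)+1)/(i+2)) = 1 by
    field_simp]
  exact Real.sqrt_one

lemma prod_c_sq (n : ℕ) : ∏ i ∈ range n, c i ^ 2 = n + 1 := by
  induction n with
  | zero => simp
  | succ n ih =>
    rw [prod_range_succ, ih, c_sq]
    have h1 : ((n:ℝ)+1) ≠ 0 := by positivity
    field_simp
    push_cast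
    ring

lemma quad_aux (m : ℕ) (f : ℕ → ℝ) :
    ∑ i ∈ range (m+1), (c i * f i - d i * f (i+1))^2
      = f 0^2 + (∑ i ∈ range m, (f (i+1) - f i)^2) + f m ^2
        + (d m ^2 * f (m+1)^2 - 2 * f m * f (m+1)) := by
  induction m with
  | zero =>
    have hc : c 0 ^ 2 = 2 := by rw [c_sq]; norm_num
    have hcd := c_mul_d 0
    norm_num
    linear_combination f 0^2 * hc - 2 * f 0 * f 1 * hcd
  | succ n ih =>
    rw [sum_range_succ, ih, sum_range_succ]
    have hc : c (n+1) ^ 2 = 2 - d n ^ 2 := by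
      rw [c_sq, d_sq]
      have h1 : ((n:ℝ)+2) ≠ 0 := by positivity
      push_cast
      field_simp
      ring
    have hcd := c_mul_d (n+1)
    linear_combination f (n+1)^2 * hc - 2 * f (n+1) * f (n+1+1) * hcd

end VolDmAux

namespace VolDmAux2
open VolDmAux

variable {m : ℕ}

noncomputable def X (m : ℕ) (x : Fin (m+1) → ℝ) (j : ℕ) : ℝ :=
  if h : j < m+1 then x ⟨j,h⟩ else 0

lemma X_coe (x : Fin (m+1) → ℝ) (i : Fin (m+1)) : X m x i = x i := by
  simp [X, i.isLt]

lemma X_succ_fin (x : Fin (m+1) → ℝ) (i : Fin m) : X m x ((i:ℕ)+1) = x i.succ := by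
  rw [X, dif_pos (by omega : (i:ℕ)+1 < m+1)]
  rfl

lemma X_cast_fin (x : Fin (m+1) → ℝ) (i : Fin m) : X m x (i:ℕ) = x i.castSucc := by
  rw [X, dif_pos (by omega : (i:ℕ) < m+1)]
  rfl

lemma X_zero (x : Fin (m+1) → ℝ) : X m x 0 = x 0 := by
  rw [X, dif_pos (by omega : 0 < m+1)]
  rfl

lemma X_m (x : Fin (m+1) → ℝ) : X m x m = x (Fin.last m) := by
  rw [X, dif_pos (by omega : m < m+1)]
  rfl

lemma sum_sq_diff_eq (x : Fin (m+1) → ℝ) :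
    ∑ i : Fin m, (x i.succ - x i.castSucc)^2
      = ∑ i ∈ Finset.range m, (X m x (i+1) - X m x i)^2 := by
  rw [← Fin.sum_univ_eq_sum_range (fun j => (X m x (j+1) - X m x j)^2) m]
  exact Finset.sum_congr rfl fun i _ => by rw [X_succ_fin, X_cast_fin]

lemma tele (x : Fin (m+1) → ℝ) :
    ∑ i : Fin m, (x i.succ - x i.castSucc) = x (Fin.last m) - x 0 := by
  rw [← X_m x, ← X_zero x, ← Finset.sum_range_sub (X m x) m,
    ← Fin.sum_univ_eq_sum_range (fun j => (X m x (j+1) - X m x j)) m]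
  exact Finset.sum_congr rfl fun i _ => by rw [X_succ_fin, X_cast_fin]

lemma quad_fin (x : Fin (m+1) → ℝ) :
    ∑ i : Fin (m+1), (c i * x i - d i * X m x ((i:ℕ)+1))^2
      = x 0 ^2 + (∑ i : Fin m, (x i.succ - x i.castSucc)^2) + x (Fin.last m)^2 := by
  have h1 : ∑ i : Fin (m+1), (c i * x i - d i * X m x ((i:ℕ)+1))^2
      = ∑ i ∈ Finset.range (m+1), (c i * X m x i - d i * X m x (i+1))^2 := by
    rw [← Fin.sum_univ_eq_sum_range (fun j => (c j * X m x j - d j * X m x (j+1))^2) (m+1)]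
    exact Finset.sum_congr rfl fun i _ => by rw [X_coe]
  rw [h1, quad_aux, sum_sq_diff_eq, X_zero, X_m, show X m x (m+1) = 0 from dif_neg (by omega)]
  ring

noncomputable def e (m : ℕ) (R : ℝ) (i : Fin (m+1)) : ℝ := -(R/2) + R*((i:ℕ)+1)/(m+2)

lemma shift (R : ℝ) (w : Fin (m+1) → ℝ) :
    ((w 0 + e m R 0) + R/2)^2
      + (∑ i : Fin m, ((w i.succ + e m R i.succ) - (w i.castSucc + e m R i.castSucc))^2)
      + ((w (Fin.last m) + e m R (Fin.last m)) - R/2)^2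
    = w 0^2 + (∑ i : Fin m, (w i.succ - w i.castSucc)^2) + w (Fin.last m)^2 + R^2/(m+2) := by
  have hM : ((m:ℝ)+2) ≠ 0 := by positivity
  set t := R/((m:ℝ)+2) with ht
  have h0 : e m R 0 + R/2 = t := by
    simp only [e, Fin.val_zero, Nat.cast_zero, ht]
    ring
  have hlast : e m R (Fin.last m) - R/2 = -t := by
    simp only [e, Fin.val_last, ht]
    field_simp
    ring
  have hdiff : ∀ i : Fin m, e m R i.succ - e m R i.castSucc = t := by
    intro i
    simp only [e, Fin.val_succ, Fin.coe_castSucc, ht]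
    push_cast
    field_simp
    ring
  have hsum : ∑ i : Fin m, ((w i.succ + e m R i.succ) - (w i.castSucc + e m R i.castSucc))^2
      = (∑ i : Fin m, (w i.succ - w i.castSucc)^2)
        + (2*t)*(w (Fin.last m) - w 0) + m * t^2 := by
    have hterm : ∀ i : Fin m,
        ((w i.succ + e m R i.succ) - (w i.castSucc + e m R i.castSucc))^2
        = (w i.succ - w i.castSucc)^2 + (2*t)*(w i.succ - w i.castSucc) + t^2 := by
      intro i
      have h := hdiff i
      linear_combination ((w i.succ + e m R i.succ) - (w i.castSucc + e m R i.castSucc)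
        + (w i.succ - w i.castSucc) + t) * h
    rw [Finset.sum_congr rfl (fun i _ => hterm i), Finset.sum_add_distrib,
      Finset.sum_add_distrib, ← Finset.mul_sum, tele w, Finset.sum_const]
    simp only [Finset.card_univ, Fintype.card_fin, nsmul_eq_mul]
  have hR2 : ((m:ℝ)+2) * t^2 = R^2/((m:ℝ)+2) := by
    rw [ht]; field_simp
  rw [hsum]
  linear_combination (w 0 + e m R 0 + R/2 + w 0 + t) * h0
    + (w (Fin.last m) + e m R (Fin.last m) - R/2 + w (Fin.last m) - t) * hlast + hR2

end VolDmAux2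

namespace VolDmAux3
open VolDmAux VolDmAux2

variable {m : ℕ}

noncomputable def C (m : ℕ) : Matrix (Fin (m+1)) (Fin (m+1)) ℝ :=
  fun i j => (if (j:ℕ) = (i:ℕ) then c i else 0) + (if (j:ℕ) = (i:ℕ)+1 then -(d i) else 0)

lemma C_mulVec (x : Fin (m+1) → ℝ) (i : Fin (m+1)) :
    (C m).mulVec x i = c i * x i - d i * X m x ((i:ℕ)+1) := by
  have : (C m).mulVec x i
      = (∑ j : Fin (m+1), (if (j:ℕ) = (i:ℕ) then c i else 0) * x j)
        + (∑ j : Fin (m+1), (if (j:ℕ) = (i:ℕ)+1 then -(d i) else 0) * x j) := by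
    rw [← Finset.sum_add_distrib]
    show ∑ j, C m i j * x j = _
    exact Finset.sum_congr rfl fun j _ => by simp only [C]; ring
  rw [this]
  have h1 : (∑ j : Fin (m+1), (if (j:ℕ) = (i:ℕ) then c i else 0) * x j) = c i * x i := by
    rw [Finset.sum_congr rfl (fun (j : Fin (m+1)) _ => show (if (j:ℕ) = (i:ℕ) then c ↑i else 0) * x j
        = if j = i then c ↑i * x j else 0 from by
      by_cases hj : j = i
      · subst hj; simp
      · rw [if_neg (fun h => hj (Fin.ext h)), if_neg hj, zero_mul])]
    rw [Finset.sum_ite_eq' Finset.univ i (fun j => c ↑i * x j)]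
    simp
  rw [h1]
  by_cases h : (i:ℕ)+1 < m+1
  · have h2 : (∑ j : Fin (m+1), (if (j:ℕ) = (i:ℕ)+1 then -(d i) else 0) * x j)
        = -(d i) * x ⟨(i:ℕ)+1, h⟩ := by
      rw [Finset.sum_congr rfl (fun (j : Fin (m+1)) _ =>
          show (if (j:ℕ) = (i:ℕ)+1 then -(d ↑i) else 0) * x j
          = if j = (⟨(i:ℕ)+1, h⟩ : Fin (m+1)) then -(d ↑i) * x j else 0 from by
        by_cases hj : j = (⟨(i:ℕ)+1, h⟩ : Fin (m+1))
        · subst hj; simp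
        · rw [if_neg (fun hh => hj (Fin.ext hh)), if_neg hj, zero_mul])]
      rw [Finset.sum_ite_eq' Finset.univ (⟨(i:ℕ)+1, h⟩ : Fin (m+1))
        (fun j => -(d ↑i) * x j)]
      simp
    rw [h2, X, dif_pos h]
    ring
  · have h2 : (∑ j : Fin (m+1), (if (j:ℕ) = (i:ℕ)+1 then -(d i) else 0) * x j) = 0 := by
      apply Finset.sum_eq_zero
      intro j _
      rw [if_neg (by omega), zero_mul]
    rw [h2, X, dif_neg h]
    ring

lemma C_triangular : (C m).BlockTriangular id := by
  intro i j hij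
  have : (j:ℕ) < (i:ℕ) := hij
  rw [C, if_neg (by omega), if_neg (by omega), add_zero]

lemma det_C_sq : (C m).det * (C m).det = m + 2 := by
  have hdet : (C m).det = ∏ i : Fin (m+1), c i := by
    rw [Matrix.det_of_upperTriangular C_triangular]
    exact Finset.prod_congr rfl fun i _ => by
      rw [C, if_pos rfl, if_neg (by omega), add_zero]
  rw [hdet, ← Finset.prod_mul_distrib]
  have : ∀ i : Fin (m+1), c i * c i = c ↑i ^ 2 := fun i => (sq (c i)).symm
  rw [Finset.prod_congr rfl fun i _ => this i,
    Fin.prod_univ_eq_prod_range (fun i => c i ^ 2) (m+1), prod_c_sq]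
  push_cast
  ring

noncomputable def M2 (m : ℕ) : Matrix (Fin (m+1) ⊕ Fin (m+1)) (Fin (m+1) ⊕ Fin (m+1)) ℝ :=
  Matrix.fromBlocks (C m) 0 0 (C m)

lemma det_M2 : (M2 m).det = m + 2 := by
  rw [M2, Matrix.det_fromBlocks_zero₂₁, det_C_sq]

lemma T_apply_inl (w : (Fin (m+1) ⊕ Fin (m+1)) → ℝ) (i : Fin (m+1)) :
    Matrix.toLin' (M2 m) w (Sum.inl i)
      = c i * (w ∘ Sum.inl) i - d i * X m (w ∘ Sum.inl) ((i:ℕ)+1) := by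
  rw [Matrix.toLin'_apply, ← C_mulVec]
  show ∑ j, M2 m (Sum.inl i) j * w j = _
  rw [Fintype.sum_sum_type]
  simp only [M2, Matrix.fromBlocks_apply₁₁, Matrix.fromBlocks_apply₁₂,
    Matrix.zero_apply, zero_mul, Finset.sum_const_zero, add_zero]
  rfl

lemma T_apply_inr (w : (Fin (m+1) ⊕ Fin (m+1)) → ℝ) (i : Fin (m+1)) :
    Matrix.toLin' (M2 m) w (Sum.inr i)
      = c i * (w ∘ Sum.inr) i - d i * X m (w ∘ Sum.inr) ((i:ℕ)+1) := by
  rw [Matrix.toLin'_apply, ← C_mulVec]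
  show ∑ j, M2 m (Sum.inr i) j * w j = _
  rw [Fintype.sum_sum_type]
  simp only [M2, Matrix.fromBlocks_apply₂₁, Matrix.fromBlocks_apply₂₂,
    Matrix.zero_apply, zero_mul, Finset.sum_const_zero, zero_add]
  rfl

lemma T_sq_sum (w : (Fin (m+1) ⊕ Fin (m+1)) → ℝ) :
    ∑ j : Fin (m+1) ⊕ Fin (m+1), (Matrix.toLin' (M2 m) w j)^2
      = ((w ∘ Sum.inl) 0 ^2 + (∑ i : Fin m, ((w ∘ Sum.inl) i.succ - (w ∘ Sum.inl) i.castSucc)^2)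
          + (w ∘ Sum.inl) (Fin.last m)^2)
        + ((w ∘ Sum.inr) 0 ^2 + (∑ i : Fin m, ((w ∘ Sum.inr) i.succ - (w ∘ Sum.inr) i.castSucc)^2)
          + (w ∘ Sum.inr) (Fin.last m)^2) := by
  rw [Fintype.sum_sum_type, ← quad_fin (w ∘ Sum.inl), ← quad_fin (w ∘ Sum.inr)]
  congr 1
  · exact Finset.sum_congr rfl fun i _ => by rw [T_apply_inl]
  · exact Finset.sum_congr rfl fun i _ => by rw [T_apply_inr]

end VolDmAux3

namespace VolDmMain
open VolDmAux VolDmAux2 VolDmAux3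

lemma ball_vol (m : ℕ) (r : ℝ) (hr : 0 ≤ r) :
    volume {w : (Fin (m+1) ⊕ Fin (m+1)) → ℝ | ∑ j, (w j)^2 ≤ r}
      = ENNReal.ofReal (Real.pi ^ (m+1) * r^(m+1) / (Nat.factorial (m+1))) := by
  have hmeas : MeasurableSet {w : (Fin (m+1) ⊕ Fin (m+1)) → ℝ | ∑ j, (w j)^2 ≤ r} := by
    apply measurableSet_le _ measurable_const
    exact Finset.measurable_sum _ fun j _ => ((measurable_pi_apply j).pow_const 2)
  rw [← (EuclideanSpace.volume_preserving_symm_measurableEquiv_toLp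
    (Fin (m+1) ⊕ Fin (m+1))).measure_preimage hmeas.nullMeasurableSet]
  have hball : (MeasurableEquiv.toLp 2 ((Fin (m+1) ⊕ Fin (m+1)) → ℝ)).symm
        ⁻¹' {w | ∑ j, (w j)^2 ≤ r}
      = Metric.closedBall (0 : EuclideanSpace ℝ (Fin (m+1) ⊕ Fin (m+1))) (Real.sqrt r) := by
    ext p
    simp only [Set.mem_preimage, Set.mem_setOf_eq, Metric.mem_closedBall, dist_zero_right]
    have hnorm : ‖p‖ = Real.sqrt (∑ j, (p j)^2) := by
      rw [EuclideanSpace.norm_eq]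
      congr 1
      exact Finset.sum_congr rfl fun j _ => by rw [Real.norm_eq_abs, sq_abs]
    rw [hnorm, show (MeasurableEquiv.toLp 2 ((Fin (m+1) ⊕ Fin (m+1)) → ℝ)).symm p
      = (p : (Fin (m+1) ⊕ Fin (m+1)) → ℝ) from rfl]
    exact (Real.sqrt_le_sqrt_iff hr).symm
  rw [hball, EuclideanSpace.volume_closedBall]
  have hcard : Fintype.card (Fin (m+1) ⊕ Fin (m+1)) = 2*(m+1) := by
    simp [Fintype.card_sum]; ring
  rw [hcard]
  have h1 : (ENNReal.ofReal (Real.sqrt r)) ^ (2*(m+1)) = ENNReal.ofReal (r ^ (m+1)) := by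
    rw [← ENNReal.ofReal_pow (Real.sqrt_nonneg r), pow_mul, Real.sq_sqrt hr]
  have h2 : Real.sqrt Real.pi ^ (2*(m+1)) = Real.pi ^ (m+1) := by
    rw [pow_mul, Real.sq_sqrt Real.pi_nonneg]
  have h3 : Real.Gamma ((2*(m+1) : ℕ) / 2 + 1) = Nat.factorial (m+1) := by
    rw [show ((2*(m+1) : ℕ) : ℝ) / 2 + 1 = ((m+1 : ℕ) : ℝ) + 1 by push_cast; ring,
      Real.Gamma_nat_eq_factorial]
  rw [h1, h2, h3, ← ENNReal.ofReal_mul (by positivity)]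
  congr 1
  ring

end VolDmMain

open VolDmAux VolDmAux2 VolDmAux3 VolDmMain in
/-- The Lebesgue measure in ℝ^{2(m+1)} of the sublevel set
{Z : d(Z) ≤ a} of the sum-of-squared-hop-distances statistic equals
π^{m+1} (a − R²/(m+2))^{m+1} / (m+2)!.  (Here there are m+1 relays, covering
all cases with at least one relay.) -/
theorem volume_dm_sublevel (m : ℕ) (R a : ℝ) (hR : 0 ≤ R)
    (ha : R ^ 2 / (m + 2) < a) :
    volume {z : (Fin (m + 1) → ℝ) × (Fin (m + 1) → ℝ) |
        (z.1 0 + R / 2) ^ 2 + (∑ i : Fin m, (z.1 i.succ - z.1 i.castSucc) ^ 2) +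
            (z.1 (Fin.last m) - R / 2) ^ 2 +
          ((z.2 0) ^ 2 + (∑ i : Fin m, (z.2 i.succ - z.2 i.castSucc) ^ 2) +
            (z.2 (Fin.last m)) ^ 2) ≤ a} =
      ENNReal.ofReal
        (Real.pi ^ (m + 1) * (a - R ^ 2 / (m + 2)) ^ (m + 1) /
          (Nat.factorial (m + 2))) := by
  have hr : (0:ℝ) ≤ a - R^2/(m+2) := by linarith
  set S := {z : (Fin (m + 1) → ℝ) × (Fin (m + 1) → ℝ) |
        (z.1 0 + R / 2) ^ 2 + (∑ i : Fin m, (z.1 i.succ - z.1 i.castSucc) ^ 2) +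
            (z.1 (Fin.last m) - R / 2) ^ 2 +
          ((z.2 0) ^ 2 + (∑ i : Fin m, (z.2 i.succ - z.2 i.castSucc) ^ 2) +
            (z.2 (Fin.last m)) ^ 2) ≤ a} with hSdef
  have hSm : MeasurableSet S := by
    apply measurableSet_le _ measurable_const
    apply Measurable.add
    apply Measurable.add
    apply Measurable.add
    · exact ((measurable_pi_apply 0).comp measurable_fst |>.add_const _).pow_const 2
    · exact Finset.measurable_sum _ fun i _ =>
        (((measurable_pi_apply i.succ).comp measurable_fst).sub
          ((measurable_pi_apply i.castSucc).comp measurable_fst)).pow_const 2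
    · exact (((measurable_pi_apply (Fin.last m)).comp measurable_fst).sub_const _).pow_const 2
    apply Measurable.add
    apply Measurable.add
    · exact ((measurable_pi_apply 0).comp measurable_snd).pow_const 2
    · exact Finset.measurable_sum _ fun i _ =>
        (((measurable_pi_apply i.succ).comp measurable_snd).sub
          ((measurable_pi_apply i.castSucc).comp measurable_snd)).pow_const 2
    · exact ((measurable_pi_apply (Fin.last m)).comp measurable_snd).pow_const 2
  set ε := MeasurableEquiv.sumPiEquivProdPi (fun _ : Fin (m+1) ⊕ Fin (m+1) => ℝ) with hε
  rw [← (volume_measurePreserving_sumPiEquivProdPi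
    (fun _ : Fin (m+1) ⊕ Fin (m+1) => ℝ)).measure_preimage hSm.nullMeasurableSet]
  set v : (Fin (m+1) ⊕ Fin (m+1)) → ℝ := Sum.elim (fun i => e m R i) (fun _ => 0) with hv
  rw [← (measurePreserving_add_right
    (volume : Measure ((Fin (m+1) ⊕ Fin (m+1)) → ℝ)) v).measure_preimage
    ((hSm.preimage ε.measurable).nullMeasurableSet)]
  have hset : (fun x => x + v) ⁻¹' (ε ⁻¹' S)
      = (Matrix.toLin' (M2 m)) ⁻¹' {w | ∑ j, (w j)^2 ≤ a - R^2/(m+2)} := by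
    ext w
    simp only [Set.mem_preimage, hSdef, Set.mem_setOf_eq]
    have hx : (ε (w + v)).1 = fun i => (w ∘ Sum.inl) i + e m R i := rfl
    have hy : (ε (w + v)).2 = w ∘ Sum.inr := by
      funext i
      exact add_zero _
    rw [hx, hy, T_sq_sum w]
    simp only []
    rw [shift R (w ∘ Sum.inl)]
    constructor <;> intro h <;> linarith
  rw [hset]
  have hdetval : LinearMap.det (Matrix.toLin' (M2 m)) = (m:ℝ) + 2 := by
    rw [LinearMap.det_toLin', det_M2]
  have hdet : LinearMap.det (Matrix.toLin' (M2 m)) ≠ 0 := by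
    rw [hdetval]; positivity
  rw [Measure.addHaar_preimage_linearMap volume hdet, ball_vol m _ hr, hdetval,
    abs_of_pos (by positivity), ← ENNReal.ofReal_mul (by positivity)]
  congr 1
  have hfac : (Nat.factorial (m+2) : ℝ) = ((m:ℝ)+2) * (Nat.factorial (m+1) : ℝ) := by
    rw [show m+2 = (m+1)+1 from rfl, Nat.factorial_succ]
    push_cast
    ring
  rw [hfac]
  set q := a - R^2/((m:ℝ)+2) with hq
  have h1 : ((m:ℝ)+2) ≠ 0 := by positivity
  have h2 : ((Nat.factorial (m+1) : ℝ)) ≠ 0 := by positivity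
  field_simp
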